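/- arXiv:1105.0585 — 3 statements merged into one kernel-verified Lean document; each statement's English description precedes it below -/
import Mathlib

section
/- Generating function for the q-Laguerre polynomials 𝓛^{(α)}_j(·|q²): for every real α > −1 and all reals r, t > 0 with rt < 1/(1−q), the series ∑_{j=0}^∞ 𝓛^{(α)}_j(r²/(1+q)|q²) / Γ_{q²}(α+j+1) · t^{2j}/(1+q)^j converges absolutely and J^{(1)}_α(rt|q²) = (rt/(1+q))^α · [ ∑_{j=0}^∞ 𝓛^{(α)}_j(r²/(1+q)|q²) / Γ_{q²}(α+j+1) · t^{2j}/(1+q)^j ] · e_{q²}(−q²t²/(1+q)). -/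
open scoped BigOperators
open Filter Topology

noncomputable section

/-- The q-number `[u]_q = (q^u - 1)/(q - 1)`. -/
def qNum (q u : ℝ) : ℝ := (q ^ u - 1) / (q - 1)

/-- The q-factorial `[n]_q! = ∏_{i=1}^n [i]_q`. -/
def qFact (q : ℝ) (n : ℕ) : ℝ := ∏ i ∈ Finset.range n, qNum q ((i : ℝ) + 1)

/-- The q-Gamma function `Γ_q(t) = (1-q)^{1-t} ∏_{k=0}^∞ (1-q^{k+1})/(1-q^{k+t})`. -/
def qGamma (q t : ℝ) : ℝ :=
  (1 - q) ^ (1 - t) * ∏' k : ℕ, (1 - q ^ (k + 1)) / (1 - q ^ ((k : ℝ) + t))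

/-- The q-derivative `∂^q_t f(t) = (f(qt) - f(t))/((q-1)t)`.
The `q⁻¹`-derivative is `qDeriv q⁻¹`. -/
def qDeriv (q : ℝ) (f : ℝ → ℝ) (t : ℝ) : ℝ := (f (q * t) - f t) / ((q - 1) * t)

/-- The q-Pochhammer symbol `(a; q)_k = ∏_{l=0}^{k-1} (1 - a q^l)`. -/
def qPoch (a q : ℝ) (k : ℕ) : ℝ := ∏ l ∈ Finset.range k, (1 - a * q ^ l)

/-- The q-exponential `E_q(t) = ∑_{j=0}^∞ q^{j(j-1)/2} t^j/[j]_q!`. -/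
def qExpE (q t : ℝ) : ℝ := ∑' j : ℕ, q ^ (j * (j - 1) / 2) * t ^ j / qFact q j

/-- `e_q(-u) := 1/E_q(u)` (intended for `u ≥ 0`); `qExpe q u` denotes `e_q(-u)`. -/
def qExpe (q u : ℝ) : ℝ := (qExpE q u)⁻¹

/-- The first q-Bessel function `J^{(1)}_ν(x|q²)`. -/
def qBessel1 (q ν x : ℝ) : ℝ :=
  (x / (1 + q)) ^ ν *
    ∑' i : ℕ, (-1 : ℝ) ^ i / (qFact (q ^ 2) i * qGamma (q ^ 2) ((i : ℝ) + ν + 1)) *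
      (x / (1 + q)) ^ (2 * i)

/-- The second q-Bessel function `J^{(2)}_ν(x|q²)`. -/
def qBessel2 (q ν x : ℝ) : ℝ :=
  q ^ (ν ^ 2) * (x / (1 + q)) ^ ν *
    ∑' i : ℕ, q ^ (2 * (i : ℝ) * ((i : ℝ) + ν)) * (-1 : ℝ) ^ i /
        (qFact (q ^ 2) i * qGamma (q ^ 2) ((i : ℝ) + ν + 1)) *
      (x / (1 + q)) ^ (2 * i)

/-- The q-Laguerre polynomial `𝓛^{(α)}_j(u|q²)`. -/
def qLaguerre (q α : ℝ) (j : ℕ) (u : ℝ) : ℝ :=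
  ∑ i ∈ Finset.range (j + 1),
    q ^ ((j - i) * (j - i + 1)) * (-u) ^ i / (qFact (q ^ 2) (j - i) * qFact (q ^ 2) i) *
      (qPoch (q ^ (2 * (i : ℝ) + 2 * α + 2)) (q ^ 2) (j - i) / (1 - q ^ 2) ^ (j - i))

/-- The q-Laguerre polynomial `𝓛^{(α)}_j(u|q^{-2})`. -/
def qLaguerreInv (q α : ℝ) (j : ℕ) (u : ℝ) : ℝ :=
  q ^ (-(j : ℝ) * ((j : ℝ) + 1 + 2 * α)) *
    ∑ i ∈ Finset.range (j + 1),
      q ^ (2 * (i : ℝ) * ((i : ℝ) + α)) * (-u) ^ i / (qFact (q ^ 2) (j - i) * qFact (q ^ 2) i) *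
        (qPoch (q ^ (2 * (i : ℝ) + 2 * α + 2)) (q ^ 2) (j - i) / (1 - q ^ 2) ^ (j - i))

/-- The finite Jackson q-integral `∫_0^a f(t) d_q t = (1-q) a ∑_{k=0}^∞ f(q^k a) q^k`. -/
def jackson (q a : ℝ) (f : ℝ → ℝ) : ℝ := (1 - q) * a * ∑' k : ℕ, f (q ^ k * a) * q ^ k

/-- The infinite Jackson q-integral `∫_0^{γ·∞} f(t) d_q t = (1-q) γ ∑_{k=-∞}^∞ f(q^k γ) q^k`. -/
def jacksonInf (q γ : ℝ) (f : ℝ → ℝ) : ℝ := (1 - q) * γ * ∑' k : ℤ, f (q ^ k * γ) * q ^ k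

/-- The first q-Hankel transform `𝓗̄^{q,β}_ν`. -/
def hankel1 (q μ ν β : ℝ) (f : ℝ → ℝ) (t : ℝ) : ℝ :=
  (1 + q) / μ * jackson q (Real.sqrt (μ / ((1 - q ^ 2) * β)))
    (fun r => qBessel1 q ν ((1 + q) / μ * (r * t)) / (r * t) ^ ν * r ^ (2 * ν + 1) * f r)

/-- The second q-Hankel transform `𝓗^{q,γ}_ν`. -/
def hankel2 (q μ ν γ : ℝ) (f : ℝ → ℝ) (r : ℝ) : ℝ :=
  (1 + q) / μ * jacksonInf q γ
    (fun t => qBessel2 q ν (q * ((1 + q) / μ) * (r * t)) / (r * t) ^ ν * t ^ (2 * ν + 1) * f t)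

lemma abs_log_one_sub_le {u c : ℝ} (hu : 0 ≤ u) (huc : u ≤ c) (hc : c < 1) :
    |Real.log (1 - u)| ≤ u / (1 - c) := by
  have hu1 : u < 1 := lt_of_le_of_lt huc hc
  have h1u : 0 < 1 - u := by linarith
  have h1c : 0 < 1 - c := by linarith
  have hlog_le : Real.log (1 - u) ≤ 0 := Real.log_nonpos (by linarith) (by linarith)
  rw [abs_of_nonpos hlog_le]
  have h2 : -Real.log (1 - u) = Real.log (1 - u)⁻¹ := (Real.log_inv _).symm
  rw [h2]
  have hle : Real.log (1 - u)⁻¹ ≤ (1 - u)⁻¹ - 1 :=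
    Real.log_le_sub_one_of_pos (by positivity)
  have h3 : (1 - u)⁻¹ - 1 = u / (1 - u) := by field_simp; ring
  rw [h3] at hle
  exact hle.trans (div_le_div_of_nonneg_left hu h1c (by linarith))

lemma hasProd_of_summable_log {f : ℕ → ℝ} (hpos : ∀ n, 0 < f n)
    (hlog : Summable fun n => Real.log (f n)) : HasProd f (∏' n, f n) :=
  (Real.multipliable_of_summable_log hpos hlog).hasProd

lemma tprod_pos_of_summable_log {f : ℕ → ℝ} (hpos : ∀ n, 0 < f n)
    (hlog : Summable fun n => Real.log (f n)) : 0 < ∏' n, f n := by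
  have h2 := Real.rexp_tsum_eq_tprod hpos hlog
  rw [← h2]
  exact Real.exp_pos _

section QGamma

variable {Q : ℝ} (hQ0 : 0 < Q) (hQ1 : Q < 1)

include hQ0 hQ1

lemma c_pos {x : ℝ} (hx : 0 < x) (k : ℕ) : 0 < 1 - Q ^ ((k : ℝ) + x) := by
  have : Q ^ ((k : ℝ) + x) < 1 := Real.rpow_lt_one hQ0.le hQ1 (by positivity)
  linarith

lemma summable_log_c {x : ℝ} (hx : 0 < x) :
    Summable fun k : ℕ => Real.log (1 - Q ^ ((k : ℝ) + x)) := by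
  have hQx1 : Q ^ (x : ℝ) < 1 := Real.rpow_lt_one hQ0.le hQ1 hx
  have hQxpos : 0 < Q ^ (x : ℝ) := Real.rpow_pos_of_pos hQ0 x
  apply Summable.of_abs
  apply Summable.of_nonneg_of_le (fun k => abs_nonneg _) (fun k => ?_)
    ((summable_geometric_of_lt_one hQ0.le hQ1).mul_left (Q ^ (x : ℝ) / (1 - Q ^ (x : ℝ))))
  have hkx : Q ^ ((k : ℝ) + x) = Q ^ (x : ℝ) * Q ^ k := by
    rw [Real.rpow_add hQ0, Real.rpow_natCast]; ring
  have hb : |Real.log (1 - Q ^ ((k : ℝ) + x))| ≤ Q ^ ((k : ℝ) + x) / (1 - Q ^ (x : ℝ)) := by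
    apply abs_log_one_sub_le (by positivity) _ hQx1
    rw [hkx]
    calc Q ^ (x : ℝ) * Q ^ k ≤ Q ^ (x : ℝ) * 1 := by
          apply mul_le_mul_of_nonneg_left (pow_le_one₀ hQ0.le hQ1.le) hQxpos.le
      _ = Q ^ (x : ℝ) := mul_one _
  refine hb.trans (le_of_eq ?_)
  rw [hkx]; ring

lemma summable_log_a :
    Summable fun k : ℕ => Real.log (1 - Q ^ (k + 1)) := by
  apply Summable.of_abs
  apply Summable.of_nonneg_of_le (fun k => abs_nonneg _) (fun k => ?_)
    ((summable_geometric_of_lt_one hQ0.le hQ1).mul_left (Q / (1 - Q)))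
  have hb : |Real.log (1 - Q ^ (k + 1))| ≤ Q ^ (k + 1) / (1 - Q) := by
    apply abs_log_one_sub_le (by positivity) _ hQ1
    calc Q ^ (k + 1) = Q * Q ^ k := by ring
      _ ≤ Q * 1 := by nlinarith [pow_le_one₀ hQ0.le hQ1.le (n := k), pow_nonneg hQ0.le k]
      _ = Q := mul_one _
  refine hb.trans (le_of_eq ?_)
  rw [pow_succ]; ring

lemma a_pos (k : ℕ) : 0 < 1 - Q ^ (k + 1) := by
  have : Q ^ (k + 1) < 1 := pow_lt_one₀ hQ0.le hQ1 (Nat.succ_ne_zero k)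
  linarith

lemma summable_log_g {x : ℝ} (hx : 0 < x) :
    Summable fun k : ℕ => Real.log ((1 - Q ^ (k + 1)) / (1 - Q ^ ((k : ℝ) + x))) := by
  have h := (summable_log_a hQ0 hQ1).sub (summable_log_c hQ0 hQ1 hx)
  refine h.congr fun k => ?_
  rw [Real.log_div (by linarith [a_pos hQ0 hQ1 k]) (by linarith [c_pos hQ0 hQ1 hx k])]

lemma g_pos {x : ℝ} (hx : 0 < x) (k : ℕ) :
    0 < (1 - Q ^ (k + 1)) / (1 - Q ^ ((k : ℝ) + x)) :=
  div_pos (a_pos hQ0 hQ1 k) (c_pos hQ0 hQ1 hx k)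

lemma qGamma_pos {x : ℝ} (hx : 0 < x) : 0 < qGamma Q x := by
  have h1 : (0:ℝ) < 1 - Q := by linarith
  apply mul_pos (Real.rpow_pos_of_pos h1 _)
  exact tprod_pos_of_summable_log (g_pos hQ0 hQ1 hx) (summable_log_g hQ0 hQ1 hx)

end QGamma

lemma prod_div_telescope (c : ℕ → ℝ) (hc : ∀ k, c k ≠ 0) (n : ℕ) :
    ∏ i ∈ Finset.range n, c (i + 1) / c i = c n / c 0 := by
  induction n with
  | zero => simp [div_self (hc 0)]
  | succ n ih =>
    rw [Finset.prod_range_succ, ih, div_mul_div_comm, mul_comm (c 0) (c n),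
      mul_div_mul_left _ _ (hc n)]

section QGamma2

variable {Q : ℝ} (hQ0 : 0 < Q) (hQ1 : Q < 1)

include hQ0 hQ1

set_option maxHeartbeats 1000000 in
lemma P_succ {x : ℝ} (hx : 0 < x) :
    (∏' k : ℕ, (1 - Q ^ (k + 1)) / (1 - Q ^ ((k : ℝ) + (x + 1)))) =
      (1 - Q ^ (x : ℝ)) * ∏' k : ℕ, (1 - Q ^ (k + 1)) / (1 - Q ^ ((k : ℝ) + x)) := by
  have hx1 : 0 < x + 1 := by linarith
  set c : ℕ → ℝ := fun k => 1 - Q ^ ((k : ℝ) + x) with hcdef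
  have hcpos : ∀ k, 0 < c k := c_pos hQ0 hQ1 hx
  have hc0 : c 0 = 1 - Q ^ (x : ℝ) := by simp [hcdef]
  have hkk : ∀ k : ℕ, ((k : ℝ) + (x + 1)) = (((k + 1 : ℕ)) : ℝ) + x := by
    intro k; push_cast; ring
  have hg1 : ∀ k : ℕ, (1 - Q ^ (k + 1)) / (1 - Q ^ ((k : ℝ) + (x + 1)))
      = (1 - Q ^ (k + 1)) / c (k + 1) := by intro k; rw [hkk k]
  have hlc : Summable fun k => Real.log (c k) := summable_log_c hQ0 hQ1 hx
  have hlc1 : Summable fun k : ℕ => Real.log (c (k + 1)) := (summable_nat_add_iff 1).mpr hlc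
  have hlogh : Summable fun k => Real.log (c (k + 1) / c k) := by
    refine (hlc1.sub hlc).congr fun k => ?_
    rw [Real.log_div (hcpos _).ne' (hcpos _).ne']
  have hhpos : ∀ k, 0 < c (k + 1) / c k := fun k => div_pos (hcpos _) (hcpos _)
  have hprodh : HasProd (fun k => c (k + 1) / c k) (∏' k, c (k + 1) / c k) :=
    hasProd_of_summable_log hhpos hlogh
  have hcn : Tendsto c atTop (𝓝 1) := by
    have hrw : c = fun k : ℕ => 1 - Q ^ (x : ℝ) * Q ^ k := by
      funext k
      rw [hcdef]
      simp only
      rw [Real.rpow_add hQ0, Real.rpow_natCast]; ring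
    rw [hrw]
    have h0 : Tendsto (fun k : ℕ => Q ^ (x : ℝ) * Q ^ k) atTop (𝓝 (Q ^ (x : ℝ) * 0)) :=
      (tendsto_pow_atTop_nhds_zero_of_lt_one hQ0.le hQ1).const_mul _
    simpa using tendsto_const_nhds.sub h0
  have htel : Tendsto (fun n => ∏ i ∈ Finset.range n, c (i + 1) / c i)
      atTop (𝓝 ((c 0)⁻¹)) := by
    have heq : (fun n => ∏ i ∈ Finset.range n, c (i + 1) / c i) = fun n => c n / c 0 := by
      funext n; exact prod_div_telescope c (fun k => (hcpos k).ne') n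
    rw [heq]
    have := hcn.div_const (c 0)
    simpa [one_div] using this
  have hval : (∏' k, c (k + 1) / c k) = (c 0)⁻¹ :=
    tendsto_nhds_unique hprodh.tendsto_prod_nat htel
  have hmulg : Multipliable fun k : ℕ => (1 - Q ^ (k + 1)) / (1 - Q ^ ((k : ℝ) + (x + 1))) :=
    (hasProd_of_summable_log (g_pos hQ0 hQ1 hx1) (summable_log_g hQ0 hQ1 hx1)).multipliable
  have key : (∏' k : ℕ, (1 - Q ^ (k + 1)) / (1 - Q ^ ((k : ℝ) + x)))
      = (∏' k : ℕ, (1 - Q ^ (k + 1)) / (1 - Q ^ ((k : ℝ) + (x + 1))))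
        * (∏' k, c (k + 1) / c k) := by
    rw [← hmulg.tprod_mul hprodh.multipliable]
    apply tprod_congr
    intro k
    rw [hg1 k, div_mul_div_comm, mul_comm (c (k + 1)) (c k), ← div_mul_div_comm,
      div_self (hcpos (k + 1)).ne', mul_one]
  rw [key, hval, hc0]
  have : (1 : ℝ) - Q ^ (x : ℝ) ≠ 0 := by rw [← hc0]; exact (hcpos 0).ne'
  field_simp

lemma qGamma_succ {x : ℝ} (hx : 0 < x) : qGamma Q (x + 1) = qNum Q x * qGamma Q x := by
  unfold qGamma qNum
  rw [P_succ hQ0 hQ1 hx]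
  have h1Q : (0 : ℝ) < 1 - Q := by linarith
  have h2 : (1 - Q) ^ (1 - (x + 1)) = (1 - Q) ^ (1 - x) * (1 - Q)⁻¹ := by
    rw [← Real.rpow_neg_one (1 - Q), ← Real.rpow_add h1Q]; ring_nf
  rw [h2]
  have hnum : (Q ^ (x : ℝ) - 1) / (Q - 1) = (1 - Q ^ (x : ℝ)) * (1 - Q)⁻¹ := by
    rw [show Q ^ (x : ℝ) - 1 = -(1 - Q ^ (x : ℝ)) by ring, show Q - 1 = -(1 - Q) by ring,
      neg_div_neg_eq, div_eq_mul_inv]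
  rw [hnum]
  ring

lemma qGamma_add_nat {x : ℝ} (hx : 0 < x) (k : ℕ) :
    qGamma Q (x + k) * (1 - Q) ^ k = qGamma Q x * qPoch (Q ^ (x : ℝ)) Q k := by
  induction k with
  | zero => simp [qPoch]
  | succ n ih =>
    have hxn : 0 < x + n := by positivity
    have hcast : (x + ((n + 1 : ℕ) : ℝ)) = (x + n) + 1 := by push_cast; ring
    rw [hcast, qGamma_succ hQ0 hQ1 hxn]
    unfold qPoch
    rw [Finset.prod_range_succ]
    have hnum : qNum Q (x + n) = (1 - Q ^ (x : ℝ) * Q ^ n) * (1 - Q)⁻¹ := by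
      unfold qNum
      have : Q ^ (x + (n : ℝ)) = Q ^ (x : ℝ) * Q ^ n := by
        rw [Real.rpow_add hQ0, Real.rpow_natCast]
      rw [this, show Q ^ (x : ℝ) * Q ^ n - 1 = -(1 - Q ^ (x : ℝ) * Q ^ n) by ring,
        show Q - 1 = -(1 - Q) by ring, neg_div_neg_eq, div_eq_mul_inv]
    rw [hnum, pow_succ]
    have h1Q : (1 : ℝ) - Q ≠ 0 := by intro h; linarith [sub_eq_zero.mp h]
    have : qNum Q (x+n) = qNum Q (x+n) := rfl
    calc (1 - Q ^ (x:ℝ) * Q ^ n) * (1 - Q)⁻¹ * qGamma Q (x + n) * ((1 - Q) ^ n * (1 - Q))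
        = (1 - Q ^ (x:ℝ) * Q ^ n) * (qGamma Q (x + n) * (1 - Q) ^ n) * ((1 - Q) * (1-Q)⁻¹) := by
          ring
      _ = (1 - Q ^ (x:ℝ) * Q ^ n) * (qGamma Q x * qPoch (Q ^ (x:ℝ)) Q n) * 1 := by
          rw [ih, mul_inv_cancel₀ h1Q]
      _ = qGamma Q x * ((∏ l ∈ Finset.range n, (1 - Q ^ (x:ℝ) * Q ^ l)) * (1 - Q ^ (x:ℝ) * Q ^ n)) := by
          unfold qPoch; ring

end QGamma2

section Fact

variable {Q : ℝ} (hQ0 : 0 < Q) (hQ1 : Q < 1)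
include hQ0 hQ1

lemma qNum_pos {y : ℝ} (hy : 0 < y) : 0 < qNum Q y := by
  unfold qNum
  have h1 : Q ^ (y : ℝ) < 1 := Real.rpow_lt_one hQ0.le hQ1 hy
  apply div_pos_iff.mpr
  right
  constructor <;> linarith

lemma qFact_pos (n : ℕ) : 0 < qFact Q n := by
  unfold qFact
  exact Finset.prod_pos fun i _ => qNum_pos hQ0 hQ1 (by positivity)

lemma qFact_succ (n : ℕ) : qFact Q (n + 1) = qFact Q n * qNum Q ((n : ℝ) + 1) :=
  Finset.prod_range_succ _ n

lemma tendsto_qNum (b : ℝ) :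
    Tendsto (fun n : ℕ => qNum Q ((n : ℝ) + b)) atTop (𝓝 (1 / (1 - Q))) := by
  have h : Tendsto (fun n : ℕ => (Q ^ (b : ℝ) * Q ^ n - 1) / (Q - 1)) atTop
      (𝓝 ((Q ^ (b : ℝ) * 0 - 1) / (Q - 1))) :=
    (((tendsto_pow_atTop_nhds_zero_of_lt_one hQ0.le hQ1).const_mul (Q ^ (b : ℝ))).sub_const
      1).div_const (Q - 1)
  have e1 : (Q ^ (b : ℝ) * 0 - 1) / (Q - 1) = 1 / (1 - Q) := by
    rw [mul_zero, zero_sub, show Q - 1 = -(1 - Q) by ring, neg_div_neg_eq]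
  rw [e1] at h
  refine h.congr fun n => ?_
  unfold qNum
  rw [Real.rpow_add hQ0, Real.rpow_natCast]
  ring_nf

end Fact

lemma term_eq {q α : ℝ} (hq0 : 0 < q) (hq1 : q < 1) (hα : α > -1) (u x : ℝ) (j : ℕ) :
    (∑ i ∈ Finset.range (j + 1),
        q ^ ((j - i) * (j - i + 1)) * (-u) ^ i / (qFact (q ^ 2) (j - i) * qFact (q ^ 2) i) *
          (qPoch (q ^ (2 * (i : ℝ) + 2 * α + 2)) (q ^ 2) (j - i) / (1 - q ^ 2) ^ (j - i)))
        / qGamma (q ^ 2) (α + (j : ℝ) + 1) * x ^ j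
      = ∑ i ∈ Finset.range (j + 1),
          ((-1 : ℝ) ^ i * u ^ i * x ^ i / (qFact (q ^ 2) i * qGamma (q ^ 2) ((i : ℝ) + α + 1))) *
            (q ^ ((j - i) * (j - i + 1)) * x ^ (j - i) / qFact (q ^ 2) (j - i)) := by
  have hQ0 : (0 : ℝ) < q ^ 2 := by positivity
  have hQ1 : q ^ 2 < 1 := by nlinarith
  have h1Q : (1 : ℝ) - q ^ 2 ≠ 0 := by nlinarith
  rw [Finset.sum_div, Finset.sum_mul]
  refine Finset.sum_congr rfl fun i hi => ?_
  have hij : i ≤ j := Nat.lt_succ_iff.mp (Finset.mem_range.mp hi)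
  have hi0 : (0 : ℝ) ≤ (i : ℝ) := Nat.cast_nonneg i
  have hj0 : (0 : ℝ) ≤ (j : ℝ) := Nat.cast_nonneg j
  have hy : (0 : ℝ) < α + (i : ℝ) + 1 := by linarith
  have hyj : (0 : ℝ) < α + (j : ℝ) + 1 := by linarith
  have h2 : ((q : ℝ) ^ 2) = q ^ ((2 : ℝ)) := by
    rw [← Real.rpow_natCast q 2]; norm_num
  have ha : q ^ (2 * (i : ℝ) + 2 * α + 2) = (q ^ 2 : ℝ) ^ ((α + (i : ℝ) + 1) : ℝ) := by
    rw [h2, ← Real.rpow_mul hq0.le]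
    congr 1
    ring
  have hpoch := qGamma_add_nat hQ0 hQ1 hy (j - i)
  have harg : α + (i : ℝ) + 1 + ((j - i : ℕ) : ℝ) = α + (j : ℝ) + 1 := by
    rw [Nat.cast_sub hij]; ring
  rw [harg] at hpoch
  have hGi : (0 : ℝ) < qGamma (q ^ 2) (α + (i : ℝ) + 1) := qGamma_pos hQ0 hQ1 hy
  have hGj : (0 : ℝ) < qGamma (q ^ 2) (α + (j : ℝ) + 1) := qGamma_pos hQ0 hQ1 hyj
  have hFi : (0 : ℝ) < qFact (q ^ 2) i := qFact_pos hQ0 hQ1 i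
  have hFk : (0 : ℝ) < qFact (q ^ 2) (j - i) := qFact_pos hQ0 hQ1 (j - i)
  have hpoch' : qPoch ((q ^ 2 : ℝ) ^ ((α + (i : ℝ) + 1) : ℝ)) (q ^ 2) (j - i)
      = qGamma (q ^ 2) (α + (j : ℝ) + 1) * (1 - q ^ 2) ^ (j - i)
        / qGamma (q ^ 2) (α + (i : ℝ) + 1) := by
    rw [eq_div_iff hGi.ne']
    linarith [hpoch]
  have hGcomm : qGamma (q ^ 2) ((i : ℝ) + α + 1) = qGamma (q ^ 2) (α + (i : ℝ) + 1) := by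
    congr 1; ring
  have hx_split : x ^ j = x ^ i * x ^ (j - i) := by
    rw [← pow_add, Nat.add_sub_cancel' hij]
  rw [ha, hpoch', hGcomm, hx_split, neg_pow u i]
  have hpk : ((1 : ℝ) - q ^ 2) ^ (j - i) ≠ 0 := pow_ne_zero _ h1Q
  field_simp

lemma summable_A {q α r t : ℝ} (hq0 : 0 < q) (hq1 : q < 1) (hα : α > -1)
    (hr : 0 < r) (ht : 0 < t) (hrt : r * t < 1 / (1 - q)) :
    Summable fun i : ℕ =>
      |(-1 : ℝ) ^ i / (qFact (q ^ 2) i * qGamma (q ^ 2) ((i : ℝ) + α + 1)) *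
        (r * t / (1 + q)) ^ (2 * i)| := by
  have hQ0 : (0 : ℝ) < q ^ 2 := by positivity
  have hQ1 : q ^ 2 < 1 := by nlinarith
  have h1q : (0 : ℝ) < 1 + q := by linarith
  have h1Q : (0 : ℝ) < 1 - q ^ 2 := by linarith
  set y := r * t / (1 + q) with hy
  have hy0 : 0 < y := by positivity
  have hGpos : ∀ i : ℕ, 0 < qGamma (q ^ 2) ((i : ℝ) + α + 1) := fun i =>
    qGamma_pos hQ0 hQ1 (by have : (0:ℝ) ≤ (i:ℝ) := Nat.cast_nonneg i; linarith)
  set g : ℕ → ℝ := fun i => y ^ (2 * i) / (qFact (q ^ 2) i * qGamma (q ^ 2) ((i : ℝ) + α + 1))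
    with hg
  have hgpos : ∀ i, 0 < g i := fun i =>
    div_pos (pow_pos hy0 _) (mul_pos (qFact_pos hQ0 hQ1 i) (hGpos i))
  have habs : ∀ i : ℕ,
      |(-1 : ℝ) ^ i / (qFact (q ^ 2) i * qGamma (q ^ 2) ((i : ℝ) + α + 1)) *
        (r * t / (1 + q)) ^ (2 * i)| = g i := by
    intro i
    rw [abs_mul, abs_div, abs_pow, abs_pow, abs_neg, abs_one, one_pow,
      abs_of_pos hy0, abs_of_pos (mul_pos (qFact_pos hQ0 hQ1 i) (hGpos i))]
    simp only [hg]
    ring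
  have hgsum : Summable g := by
    have hs1 : r * t * (1 - q) < 1 := by
      rw [lt_div_iff₀ (by linarith : (0:ℝ) < 1 - q)] at hrt
      linarith
    have hs0 : 0 < r * t * (1 - q) := by
      have := mul_pos hr ht
      nlinarith
    apply summable_of_ratio_test_tendsto_lt_one (l := (r * t * (1 - q)) ^ 2)
    · nlinarith
    · exact Filter.Eventually.of_forall fun i => (hgpos i).ne'
    · have hratio : ∀ i : ℕ, ‖g (i + 1)‖ / ‖g i‖
          = y ^ 2 / (qNum (q ^ 2) ((i : ℝ) + 1) * qNum (q ^ 2) ((i : ℝ) + α + 1)) := by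
        intro i
        rw [Real.norm_eq_abs, Real.norm_eq_abs, abs_of_pos (hgpos _), abs_of_pos (hgpos _)]
        have hF : qFact (q ^ 2) (i + 1) = qFact (q ^ 2) i * qNum (q ^ 2) ((i : ℝ) + 1) :=
          Finset.prod_range_succ _ i
        have hxar : (0 : ℝ) < (i : ℝ) + α + 1 := by
          have : (0:ℝ) ≤ (i:ℝ) := Nat.cast_nonneg i; linarith
        have hG : qGamma (q ^ 2) (((i + 1 : ℕ) : ℝ) + α + 1)
            = qNum (q ^ 2) ((i : ℝ) + α + 1) * qGamma (q ^ 2) ((i : ℝ) + α + 1) := by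
          have harg : (((i + 1 : ℕ)) : ℝ) + α + 1 = ((i : ℝ) + α + 1) + 1 := by
            push_cast; ring
          rw [harg, qGamma_succ hQ0 hQ1 hxar]
        simp only [hg]
        rw [hF, hG]
        have hN1 : qNum (q ^ 2) ((i : ℝ) + 1) ≠ 0 := (qNum_pos hQ0 hQ1 (by positivity)).ne'
        have hN2 : qNum (q ^ 2) ((i : ℝ) + α + 1) ≠ 0 := (qNum_pos hQ0 hQ1 hxar).ne'
        have hFne : qFact (q ^ 2) i ≠ 0 := (qFact_pos hQ0 hQ1 i).ne'
        have hGne : qGamma (q ^ 2) ((i : ℝ) + α + 1) ≠ 0 := (hGpos i).ne'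
        have hpow : y ^ (2 * (i + 1)) = y ^ (2 * i) * y ^ 2 := by
          rw [← pow_add]; ring_nf
        rw [hpow]
        field_simp
      have hN1t := tendsto_qNum hQ0 hQ1 1
      have hN2t : Tendsto (fun n : ℕ => qNum (q ^ 2) ((n : ℝ) + α + 1)) atTop
          (𝓝 (1 / (1 - q ^ 2))) := by
        refine (tendsto_qNum hQ0 hQ1 (α + 1)).congr fun n => ?_
        congr 1
        ring
      have hden_ne : (1 / (1 - q ^ 2)) * (1 / (1 - q ^ 2)) ≠ 0 := by positivity
      have htend := (tendsto_const_nhds (x := y ^ 2)).div (hN1t.mul hN2t) hden_ne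
      have hval : y ^ 2 / ((1 / (1 - q ^ 2)) * (1 / (1 - q ^ 2))) = (r * t * (1 - q)) ^ 2 := by
        rw [hy]
        field_simp
        ring
      rw [hval] at htend
      exact htend.congr fun i => (hratio i).symm
  exact hgsum.congr fun i => (habs i).symm

lemma summable_B {q x : ℝ} (hq0 : 0 < q) (hq1 : q < 1) (hx : 0 < x) :
    Summable fun k : ℕ => q ^ (k * (k + 1)) * x ^ k / qFact (q ^ 2) k := by
  have hQ0 : (0 : ℝ) < q ^ 2 := by positivity
  have hQ1 : q ^ 2 < 1 := by nlinarith
  set B : ℕ → ℝ := fun k => q ^ (k * (k + 1)) * x ^ k / qFact (q ^ 2) k with hB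
  have hBpos : ∀ k, 0 < B k := fun k =>
    div_pos (mul_pos (pow_pos hq0 _) (pow_pos hx _)) (qFact_pos hQ0 hQ1 k)
  apply summable_of_ratio_test_tendsto_lt_one (l := 0) zero_lt_one
    (Filter.Eventually.of_forall fun k => (hBpos k).ne')
  have hratio : ∀ k : ℕ, ‖B (k + 1)‖ / ‖B k‖
      = q ^ (2 * (k + 1)) * (x / qNum (q ^ 2) ((k : ℝ) + 1)) := by
    intro k
    rw [Real.norm_eq_abs, Real.norm_eq_abs, abs_of_pos (hBpos _), abs_of_pos (hBpos _)]
    simp only [hB]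
    have hF : qFact (q ^ 2) (k + 1) = qFact (q ^ 2) k * qNum (q ^ 2) ((k : ℝ) + 1) :=
      Finset.prod_range_succ _ k
    have hexp : (k + 1) * (k + 1 + 1) = k * (k + 1) + 2 * (k + 1) := by ring
    rw [hF, hexp, pow_add, pow_succ x]
    have hN1 : qNum (q ^ 2) ((k : ℝ) + 1) ≠ 0 := (qNum_pos hQ0 hQ1 (by positivity)).ne'
    have hFne : qFact (q ^ 2) k ≠ 0 := (qFact_pos hQ0 hQ1 k).ne'
    have hqk : (q : ℝ) ^ (k * (k + 1)) ≠ 0 := by positivity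
    have hxk : x ^ k ≠ 0 := by positivity
    field_simp
  have h1 : Tendsto (fun k : ℕ => q ^ (2 * (k + 1)) : ℕ → ℝ) atTop (𝓝 0) := by
    have : (fun k : ℕ => (q : ℝ) ^ (2 * (k + 1))) = fun k : ℕ => q ^ 2 * (q ^ 2) ^ k := by
      funext k
      rw [← pow_mul]
      ring
    rw [this]
    have := (tendsto_pow_atTop_nhds_zero_of_lt_one hQ0.le hQ1).const_mul (q ^ 2)
    simpa using this
  have h2 : Tendsto (fun k : ℕ => x / qNum (q ^ 2) ((k : ℝ) + 1)) atTop
      (𝓝 (x / (1 / (1 - q ^ 2)))) :=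
    (tendsto_const_nhds (x := x)).div (tendsto_qNum hQ0 hQ1 1)
      (one_div_pos.mpr (by linarith : (0:ℝ) < 1 - q ^ 2)).ne'
  have := h1.mul h2
  rw [zero_mul] at this
  exact this.congr fun k => (hratio k).symm

lemma B_eq {q x : ℝ} (k : ℕ) :
    (q ^ 2 : ℝ) ^ (k * (k - 1) / 2) * (q ^ 2 * x) ^ k / qFact (q ^ 2) k
      = q ^ (k * (k + 1)) * x ^ k / qFact (q ^ 2) k := by
  congr 1
  have hdvd : 2 ∣ k * (k - 1) := by
    cases k with
    | zero => simp
    | succ m =>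
      rw [Nat.succ_sub_one, Nat.mul_comm]
      exact (Nat.even_mul_succ_self m).two_dvd
  have h2 : 2 * (k * (k - 1) / 2) = k * (k - 1) := Nat.mul_div_cancel' hdvd
  have hexp : k * (k - 1) + 2 * k = k * (k + 1) := by
    cases k with
    | zero => rfl
    | succ m => rw [Nat.succ_sub_one]; ring
  calc (q ^ 2 : ℝ) ^ (k * (k - 1) / 2) * (q ^ 2 * x) ^ k
      = q ^ (2 * (k * (k - 1) / 2)) * (q ^ (2 * k) * x ^ k) := by
        rw [mul_pow, pow_mul q 2 (k * (k - 1) / 2), pow_mul q 2 k]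
    _ = q ^ (k * (k - 1) + 2 * k) * x ^ k := by rw [h2, pow_add]; ring
    _ = q ^ (k * (k + 1)) * x ^ k := by rw [hexp]

/-- generating function for the q-Laguerre polynomials `𝓛^{(α)}_j(·|q²)`:
for `α > -1` and `r, t > 0` with `rt < 1/(1-q)`, the series converges absolutely and
`J^{(1)}_α(rt|q²) = (rt/(1+q))^α · [∑_j 𝓛^{(α)}_j(r²/(1+q)|q²)/Γ_{q²}(α+j+1) · t^{2j}/(1+q)^j]
  · e_{q²}(-q²t²/(1+q))`. -/
theorem qBessel1_generating (q : ℝ) (hq0 : 0 < q) (hq1 : q < 1)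
    (α : ℝ) (hα : α > -1) (r t : ℝ) (hr : 0 < r) (ht : 0 < t)
    (hrt : r * t < 1 / (1 - q)) :
    Summable (fun j : ℕ =>
      qLaguerre q α j (r ^ 2 / (1 + q)) / qGamma (q ^ 2) (α + (j : ℝ) + 1) *
        (t ^ (2 * j) / (1 + q) ^ j)) ∧
    qBessel1 q α (r * t) =
      (r * t / (1 + q)) ^ α *
        (∑' j : ℕ, qLaguerre q α j (r ^ 2 / (1 + q)) / qGamma (q ^ 2) (α + (j : ℝ) + 1) *
          (t ^ (2 * j) / (1 + q) ^ j)) *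
        qExpe (q ^ 2) (q ^ 2 * t ^ 2 / (1 + q)) := by
  have hQ0 : (0 : ℝ) < q ^ 2 := by positivity
  have hQ1 : q ^ 2 < 1 := by nlinarith
  have h1q : (0 : ℝ) < 1 + q := by linarith
  have hxpos : (0 : ℝ) < t ^ 2 / (1 + q) := by positivity
  set A : ℕ → ℝ := fun i =>
    (-1 : ℝ) ^ i / (qFact (q ^ 2) i * qGamma (q ^ 2) ((i : ℝ) + α + 1)) *
      (r * t / (1 + q)) ^ (2 * i) with hAdef
  set B : ℕ → ℝ := fun k => q ^ (k * (k + 1)) * (t ^ 2 / (1 + q)) ^ k / qFact (q ^ 2) k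
    with hBdef
  have hAsum : Summable fun i => ‖A i‖ :=
    (summable_A hq0 hq1 hα hr ht hrt).congr fun i => (Real.norm_eq_abs (A i)).symm
  have hBpos : ∀ k, 0 < B k := fun k =>
    div_pos (mul_pos (pow_pos hq0 _) (pow_pos hxpos _)) (qFact_pos hQ0 hQ1 k)
  have hBsum : Summable B := summable_B hq0 hq1 hxpos
  have hBsum' : Summable fun k => ‖B k‖ :=
    hBsum.congr fun k => ((Real.norm_eq_abs (B k)).trans (abs_of_pos (hBpos k))).symm
  have hterm : ∀ j : ℕ,
      qLaguerre q α j (r ^ 2 / (1 + q)) / qGamma (q ^ 2) (α + (j : ℝ) + 1) *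
        (t ^ (2 * j) / (1 + q) ^ j)
        = ∑ i ∈ Finset.range (j + 1), A i * B (j - i) := by
    intro j
    have hx1 : (t ^ 2 / (1 + q)) ^ j = t ^ (2 * j) / (1 + q) ^ j := by
      rw [div_pow, ← pow_mul]
    rw [← hx1]
    unfold qLaguerre
    rw [term_eq hq0 hq1 hα (r ^ 2 / (1 + q)) (t ^ 2 / (1 + q)) j]
    refine Finset.sum_congr rfl fun i hi => ?_
    simp only [hAdef, hBdef]
    have hsq : (r * t / (1 + q)) ^ (2 * i)
        = (r ^ 2 / (1 + q)) ^ i * (t ^ 2 / (1 + q)) ^ i := by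
      rw [pow_mul, show (r * t / (1 + q)) ^ 2 = r ^ 2 / (1 + q) * (t ^ 2 / (1 + q)) by
        field_simp, mul_pow]
    rw [hsq]
    ring
  have hsum1 : Summable (fun j : ℕ => ∑ i ∈ Finset.range (j + 1), A i * B (j - i)) :=
    (summable_norm_sum_mul_range_of_summable_norm hAsum hBsum').of_norm
  refine ⟨hsum1.congr fun j => (hterm j).symm, ?_⟩
  have htsum : (∑' j : ℕ, qLaguerre q α j (r ^ 2 / (1 + q)) /
        qGamma (q ^ 2) (α + (j : ℝ) + 1) * (t ^ (2 * j) / (1 + q) ^ j))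
      = (∑' i, A i) * (∑' k, B k) := by
    rw [tsum_congr hterm]
    exact (tsum_mul_tsum_eq_tsum_sum_range_of_summable_norm hAsum hBsum').symm
  have hE : qExpE (q ^ 2) (q ^ 2 * t ^ 2 / (1 + q)) = ∑' k, B k := by
    unfold qExpE
    refine tsum_congr fun k => ?_
    have harg : q ^ 2 * t ^ 2 / (1 + q) = q ^ 2 * (t ^ 2 / (1 + q)) := by ring
    rw [harg, B_eq k]
  have hBtsum_pos : (0 : ℝ) < ∑' k, B k := by
    have h0 : B 0 = 1 := by
      simp [hBdef, qFact]
    calc (0 : ℝ) < 1 := one_pos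
      _ = B 0 := h0.symm
      _ ≤ ∑' k, B k := hBsum.le_tsum 0 fun i _ => (hBpos i).le
  rw [htsum]
  unfold qBessel1 qExpe
  rw [hE]
  have hAeq : (∑' i : ℕ, (-1 : ℝ) ^ i / (qFact (q ^ 2) i *
      qGamma (q ^ 2) ((i : ℝ) + α + 1)) * (r * t / (1 + q)) ^ (2 * i)) = ∑' i, A i := rfl
  rw [hAeq, mul_assoc, mul_assoc, mul_inv_cancel₀ hBtsum_pos.ne', mul_one]
end
end

section
/- Expansion of a monomial in the q-Laguerre polynomials 𝓛^{(ν)}_i(·|q^{−2}): for every real ν > −1, every j ∈ ℕ and every real t, t^{2j} / ( (1+q)^j [j]_{q²}! ) = ∑_{i=0}^j (−1)^i (q^{2i+2ν+2}; q²)_{j−i} / ( [j−i]_{q²}! (1−q²)^{j−i} ) · q^{(j−i)(j−i+1) + (i+1)(i+2ν+2) − 2(j+1)(j+ν+1)} · 𝓛^{(ν)}_i(q²t²/(1+q)|q^{−2}). -/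
open scoped BigOperators

noncomputable section

/-! ### Auxiliary lemmas for the proof of `monomial_qLaguerreInv_expansion` -/

lemma qNum_natCast' (p : ℝ) (n : ℕ) : qNum p ((n : ℝ)) = (p ^ n - 1) / (p - 1) := by
  rw [qNum, Real.rpow_natCast]

lemma qFact_zero' (p : ℝ) : qFact p 0 = 1 := by simp [qFact]

lemma qPoch_zero' (a p : ℝ) : qPoch a p 0 = 1 := by simp [qPoch]

lemma qFact_succ' (p : ℝ) (n : ℕ) :
    qFact p (n + 1) = qFact p n * ((p ^ (n + 1) - 1) / (p - 1)) := by
  rw [qFact, Finset.prod_range_succ, ← qFact]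
  congr 1
  have : ((n : ℝ) + 1) = ((n + 1 : ℕ) : ℝ) := by push_cast; ring
  rw [this, qNum_natCast']

lemma qFact_pos' {p : ℝ} (hp0 : 0 < p) (hp1 : p < 1) (n : ℕ) : 0 < qFact p n := by
  induction n with
  | zero => simp [qFact]
  | succ n ih =>
    rw [qFact_succ']
    refine mul_pos ih (div_pos_of_neg_of_neg ?_ (by linarith))
    have : p ^ (n + 1) < 1 := pow_lt_one₀ hp0.le hp1 (Nat.succ_ne_zero n)
    linarith

lemma qPoch_add' (a p : ℝ) (m r : ℕ) :
    qPoch a p (m + r) = qPoch a p m * qPoch (a * p ^ m) p r := by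
  rw [qPoch, Finset.prod_range_add, ← qPoch, qPoch]
  congr 1
  refine Finset.prod_congr rfl fun l _ => ?_
  rw [pow_add]; ring

/-- Gaussian binomial coefficient over `ℝ`. -/
def gbAux (p : ℝ) : ℕ → ℕ → ℝ
  | _, 0 => 1
  | 0, _ + 1 => 0
  | n + 1, m + 1 => gbAux p n (m + 1) + p ^ (n - m) * gbAux p n m

lemma gbAux_zero_right (p : ℝ) (n : ℕ) : gbAux p n 0 = 1 := by cases n <;> rfl

lemma gbAux_eq_zero (p : ℝ) : ∀ {n m : ℕ}, n < m → gbAux p n m = 0 := by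
  intro n
  induction n with
  | zero => intro m h; match m, h with | m + 1, _ => rfl
  | succ n ih =>
    intro m h
    match m, h with
    | m + 1, h =>
      show gbAux p n (m + 1) + p ^ (n - m) * gbAux p n m = 0
      rw [ih (by omega), ih (by omega)]
      ring

lemma gbAux_mul_fact {p : ℝ} (hp : p ≠ 1) : ∀ n m : ℕ, m ≤ n →
    gbAux p n m * (qFact p m * qFact p (n - m)) = qFact p n := by
  intro n
  induction n with
  | zero => intro m hm; interval_cases m; simp [gbAux_zero_right, qFact]
  | succ n ih =>
    intro m hm
    match m with
    | 0 => simp [gbAux_zero_right, qFact]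
    | m + 1 =>
      have hm' : m ≤ n := by omega
      show (gbAux p n (m + 1) + p ^ (n - m) * gbAux p n m) * _ = _
      rcases eq_or_lt_of_le hm' with h | h
      · subst h
        rw [gbAux_eq_zero p (by omega)]
        have h0 : m + 1 - (m + 1) = 0 := by omega
        have h1 : m - m = 0 := by omega
        have hgb : gbAux p m m * qFact p m = qFact p m := by
          have h2 := ih m le_rfl
          rw [Nat.sub_self] at h2
          have : qFact p 0 = 1 := by simp [qFact]
          rw [this, mul_one] at h2
          exact h2
        rw [h0, h1]
        have hq0 : qFact p 0 = 1 := by simp [qFact]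
        rw [hq0, pow_zero, mul_one, zero_add, one_mul, qFact_succ', ← mul_assoc, hgb]
      · -- m + 1 ≤ n
        have h1 : n + 1 - (m + 1) = n - m := by omega
        have h2 : n - (m + 1) + 1 = n - m := by omega
        obtain ⟨d, hd⟩ : ∃ d, n = m + 1 + d := ⟨n - (m + 1), by omega⟩
        have ihA := ih (m + 1) (by omega)
        have ihB := ih m hm'
        rw [h1]
        have e1 : qFact p (n - m) = qFact p (n - (m + 1)) * ((p ^ (n - m) - 1) / (p - 1)) := by
          rw [← h2, qFact_succ', h2]
        have e2 : qFact p (m + 1) = qFact p m * ((p ^ (m + 1) - 1) / (p - 1)) := qFact_succ' p m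
        have e3 : qFact p (n + 1) = qFact p n * ((p ^ (n + 1) - 1) / (p - 1)) := qFact_succ' p n
        rw [e1, e2, e3]
        have key : (p ^ (n - m) - 1) / (p - 1) + p ^ (n - m) * ((p ^ (m + 1) - 1) / (p - 1))
            = (p ^ (n + 1) - 1) / (p - 1) := by
          have hp1 : p - 1 ≠ 0 := sub_ne_zero.mpr hp
          rw [mul_div_assoc', ← add_div, div_eq_div_iff hp1 hp1]
          subst hd
          have hnm : m + 1 + d - m = d + 1 := by omega
          rw [hnm]
          ring_nf
        calc (gbAux p n (m + 1) + p ^ (n - m) * gbAux p n m) *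
              (qFact p m * ((p ^ (m + 1) - 1) / (p - 1)) *
                (qFact p (n - (m + 1)) * ((p ^ (n - m) - 1) / (p - 1))))
            = (gbAux p n (m + 1) * (qFact p (m + 1) * qFact p (n - (m + 1)))) *
                ((p ^ (n - m) - 1) / (p - 1))
              + p ^ (n - m) * (gbAux p n m * (qFact p m * qFact p (n - m))) *
                ((p ^ (m + 1) - 1) / (p - 1)) := by
              rw [e1, e2]; ring
          _ = qFact p n * ((p ^ (n - m) - 1) / (p - 1)
                + p ^ (n - m) * ((p ^ (m + 1) - 1) / (p - 1))) := by
              rw [ihA, ihB]; ring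
          _ = qFact p n * ((p ^ (n + 1) - 1) / (p - 1)) := by rw [key]

lemma qbinomAux (q : ℝ) : ∀ (n : ℕ) (x : ℝ),
    ∏ l ∈ Finset.range n, (1 - x * (q ^ 2) ^ l)
      = ∑ m ∈ Finset.range (n + 1), (-1 : ℝ) ^ m * q ^ (m * (m - 1)) * gbAux (q ^ 2) n m * x ^ m := by
  intro n
  induction n with
  | zero => intro x; simp [gbAux_zero_right]
  | succ n ih =>
    intro x
    rw [Finset.prod_range_succ, ih x, Finset.sum_range_succ' _ (n + 1)]
    have hsplit : ∀ m ∈ Finset.range (n + 1),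
        (-1 : ℝ) ^ (m + 1) * q ^ ((m + 1) * (m + 1 - 1)) * gbAux (q ^ 2) (n + 1) (m + 1) * x ^ (m + 1)
        = (-1 : ℝ) ^ (m + 1) * q ^ ((m + 1) * m) * gbAux (q ^ 2) n (m + 1) * x ^ (m + 1)
          + (-((q ^ 2) ^ n * x)) * ((-1 : ℝ) ^ m * q ^ (m * (m - 1)) * gbAux (q ^ 2) n m * x ^ m) := by
      intro m hm
      have hmn : m ≤ n := by have := Finset.mem_range.mp hm; omega
      have hgb : gbAux (q ^ 2) (n + 1) (m + 1)
          = gbAux (q ^ 2) n (m + 1) + (q ^ 2) ^ (n - m) * gbAux (q ^ 2) n m := rfl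
      have hexp : q ^ ((m + 1) * m) * (q ^ 2) ^ (n - m) = q ^ (m * (m - 1)) * (q ^ 2) ^ n := by
        rw [← pow_mul, ← pow_mul, ← pow_add, ← pow_add]
        congr 1
        obtain ⟨d, rfl⟩ : ∃ d, n = m + d := ⟨n - m, by omega⟩
        rw [Nat.add_sub_cancel_left]
        cases m with
        | zero => ring
        | succ s => simp only [Nat.succ_sub_one]; ring
      have h1 : m + 1 - 1 = m := rfl
      rw [h1, hgb]
      calc (-1 : ℝ) ^ (m + 1) * q ^ ((m + 1) * m)
            * (gbAux (q ^ 2) n (m + 1) + (q ^ 2) ^ (n - m) * gbAux (q ^ 2) n m) * x ^ (m + 1)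
          = (-1 : ℝ) ^ (m + 1) * q ^ ((m + 1) * m) * gbAux (q ^ 2) n (m + 1) * x ^ (m + 1)
            + (-1 : ℝ) ^ (m + 1) * (q ^ ((m + 1) * m) * (q ^ 2) ^ (n - m)) * gbAux (q ^ 2) n m
              * x ^ (m + 1) := by
            ring
        _ = _ := by rw [hexp]; ring
    rw [Finset.sum_congr rfl hsplit, Finset.sum_add_distrib]
    have hz : ∑ m ∈ Finset.range (n + 1),
        (-1 : ℝ) ^ (m + 1) * q ^ ((m + 1) * m) * gbAux (q ^ 2) n (m + 1) * x ^ (m + 1)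
          + (-1 : ℝ) ^ 0 * q ^ (0 * (0 - 1)) * gbAux (q ^ 2) (n + 1) 0 * x ^ 0
        = ∑ m ∈ Finset.range (n + 1), (-1 : ℝ) ^ m * q ^ (m * (m - 1)) * gbAux (q ^ 2) n m * x ^ m := by
      rw [Finset.sum_range_succ]
      rw [gbAux_eq_zero (q ^ 2) (Nat.lt_succ_self n)]
      rw [Finset.sum_range_succ'
        (fun m => (-1 : ℝ) ^ m * q ^ (m * (m - 1)) * gbAux (q ^ 2) n m * x ^ m) n]
      simp [gbAux_zero_right]
    rw [add_right_comm, hz, ← Finset.mul_sum]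
    ring

lemma keysumAux (q : ℝ) (hq0 : 0 < q) (hq1 : q < 1) (n : ℕ) (hn : 1 ≤ n) :
    ∑ m ∈ Finset.range (n + 1),
      (-1 : ℝ) ^ m * q ^ ((n - m) * (n - m + 1) + 2 * m) /
        (qFact (q ^ 2) (n - m) * qFact (q ^ 2) m) = 0 := by
  have hp0 : (0 : ℝ) < q ^ 2 := by positivity
  have hp1 : q ^ 2 < 1 := by nlinarith
  have hqne : q ≠ 0 := hq0.ne'
  have hFne : ∀ k, qFact (q ^ 2) k ≠ 0 := fun k => (qFact_pos' hp0 hp1 k).ne'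
  set x : ℝ := q ^ 2 * ((q ^ 2) ^ n)⁻¹ with hx
  have hterm : ∀ m ∈ Finset.range (n + 1),
      (-1 : ℝ) ^ m * q ^ ((n - m) * (n - m + 1) + 2 * m) /
        (qFact (q ^ 2) (n - m) * qFact (q ^ 2) m)
      = q ^ (n * (n + 1)) / qFact (q ^ 2) n *
          ((-1 : ℝ) ^ m * q ^ (m * (m - 1)) * gbAux (q ^ 2) n m * x ^ m) := by
    intro m hm
    have hmn : m ≤ n := by have := Finset.mem_range.mp hm; omega
    have hgb : gbAux (q ^ 2) n m
        = qFact (q ^ 2) n / (qFact (q ^ 2) m * qFact (q ^ 2) (n - m)) := by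
      rw [eq_div_iff (mul_ne_zero (hFne m) (hFne (n - m)))]
      exact gbAux_mul_fact (by nlinarith) n m hmn
    have hpow : q ^ ((n - m) * (n - m + 1) + 2 * m) * q ^ (2 * n * m)
        = q ^ (n * (n + 1)) * q ^ (m * (m - 1)) * q ^ (2 * m) := by
      rw [← pow_add, ← pow_add, ← pow_add]
      congr 1
      obtain ⟨d, rfl⟩ : ∃ d, n = m + d := ⟨n - m, by omega⟩
      rw [Nat.add_sub_cancel_left]
      cases m with
      | zero => ring
      | succ s => simp only [Nat.succ_sub_one]; ring
    have hA : q ^ ((n - m) * (n - m + 1) + 2 * m)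
        = q ^ (n * (n + 1)) * q ^ (m * (m - 1)) * q ^ (2 * m) * (q ^ (2 * n * m))⁻¹ := by
      rw [eq_mul_inv_iff_mul_eq₀ (pow_ne_zero _ hqne)]
      exact hpow
    rw [hgb, hx, mul_pow, inv_pow, ← pow_mul q 2 m, ← pow_mul (q ^ 2) n m, ← pow_mul q 2 (n * m),
      show 2 * (n * m) = 2 * n * m from by ring, hA]
    field_simp
    rw [div_eq_div_iff (mul_ne_zero (hFne _) (hFne _))
      (mul_ne_zero (mul_ne_zero (hFne _) (hFne _)) (hFne n))]
    ring
  rw [Finset.sum_congr rfl hterm, ← Finset.mul_sum, ← qbinomAux q n x]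
  have hzero : ∏ l ∈ Finset.range n, (1 - x * (q ^ 2) ^ l) = 0 := by
    refine Finset.prod_eq_zero (i := n - 1) (Finset.mem_range.mpr (by omega)) ?_
    rw [hx]
    have : q ^ 2 * ((q ^ 2) ^ n)⁻¹ * (q ^ 2) ^ (n - 1) = (q ^ 2) ^ n * ((q ^ 2) ^ n)⁻¹ := by
      rw [show n = 1 + (n - 1) by omega, pow_add, pow_one]
      ring_nf
      rw [show 1 + (n - 1) - 1 = n - 1 by omega]
    rw [this, mul_inv_cancel₀ (by positivity)]
    ring
  rw [hzero, mul_zero]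

/-- expansion of a monomial in the q-Laguerre polynomials `𝓛^{(ν)}_i(·|q^{-2})`:
for `ν > -1`, `j ∈ ℕ` and every real `t`,
`t^{2j}/((1+q)^j [j]_{q²}!) = ∑_{i=0}^j (-1)^i (q^{2i+2ν+2};q²)_{j-i}/([j-i]_{q²}! (1-q²)^{j-i})
  · q^{(j-i)(j-i+1)+(i+1)(i+2ν+2)-2(j+1)(j+ν+1)} 𝓛^{(ν)}_i(q²t²/(1+q)|q^{-2})`. -/
theorem monomial_qLaguerreInv_expansion (q : ℝ) (hq0 : 0 < q) (hq1 : q < 1)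
    (ν : ℝ) (hν : ν > -1) (j : ℕ) (t : ℝ) :
    t ^ (2 * j) / ((1 + q) ^ j * qFact (q ^ 2) j) =
      ∑ i ∈ Finset.range (j + 1),
        (-1 : ℝ) ^ i * qPoch (q ^ (2 * (i : ℝ) + 2 * ν + 2)) (q ^ 2) (j - i) /
            (qFact (q ^ 2) (j - i) * (1 - q ^ 2) ^ (j - i)) *
          q ^ (((j : ℝ) - (i : ℝ)) * ((j : ℝ) - (i : ℝ) + 1) +
                ((i : ℝ) + 1) * ((i : ℝ) + 2 * ν + 2) -
                2 * ((j : ℝ) + 1) * ((j : ℝ) + ν + 1)) *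
          qLaguerreInv q ν i (q ^ 2 * t ^ 2 / (1 + q)) := by
  have hqne : q ≠ 0 := hq0.ne'
  have hp0 : (0 : ℝ) < q ^ 2 := by positivity
  have hp1 : q ^ 2 < 1 := by nlinarith
  have hFne : ∀ k, qFact (q ^ 2) k ≠ 0 := fun k => (qFact_pos' hp0 hp1 k).ne'
  have h1q : (1 : ℝ) + q ≠ 0 := by positivity
  simp only [qLaguerreInv, Finset.mul_sum]
  rw [Finset.sum_comm' (s := Finset.range (j + 1)) (t := fun i => Finset.range (i + 1))
    (t' := Finset.range (j + 1)) (s' := fun k => Finset.Icc k j)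
    (fun i k => by simp only [Finset.mem_range, Finset.mem_Icc]; omega)]
  rw [Finset.sum_eq_single_of_mem j (Finset.self_mem_range_succ j)]
  · rw [Finset.Icc_self, Finset.sum_singleton]
    simp only [Nat.sub_self, qPoch_zero', qFact_zero', pow_zero, one_mul, mul_one, div_one]
    symm
    have hneg : (-1 : ℝ) ^ j * (-(q ^ 2 * t ^ 2 / (1 + q))) ^ j = (q ^ 2 * t ^ 2 / (1 + q)) ^ j := by
      rw [← mul_pow, neg_one_mul, neg_neg]
    have hR : q ^ (((j : ℝ) - (j : ℝ)) * ((j : ℝ) - (j : ℝ) + 1) +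
          ((j : ℝ) + 1) * ((j : ℝ) + 2 * ν + 2) - 2 * ((j : ℝ) + 1) * ((j : ℝ) + ν + 1)) *
        (q ^ (-(j : ℝ) * ((j : ℝ) + 1 + 2 * ν)) * q ^ (2 * (j : ℝ) * ((j : ℝ) + ν)))
        = (q ^ (2 * j) : ℝ)⁻¹ := by
      rw [← Real.rpow_add hq0, ← Real.rpow_add hq0,
        show ((q : ℝ) ^ (2 * j)) = q ^ (((2 * j : ℕ) : ℝ)) from (Real.rpow_natCast q (2 * j)).symm,
        ← Real.rpow_neg_one, ← Real.rpow_mul hq0.le]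
      congr 1
      push_cast
      ring
    calc (-1 : ℝ) ^ j *
            q ^ (((j : ℝ) - (j : ℝ)) * ((j : ℝ) - (j : ℝ) + 1) +
              ((j : ℝ) + 1) * ((j : ℝ) + 2 * ν + 2) - 2 * ((j : ℝ) + 1) * ((j : ℝ) + ν + 1)) *
            (q ^ (-(j : ℝ) * ((j : ℝ) + 1 + 2 * ν)) *
              (q ^ (2 * (j : ℝ) * ((j : ℝ) + ν)) * (-(q ^ 2 * t ^ 2 / (1 + q))) ^ j /
                qFact (q ^ 2) j))
        = ((-1 : ℝ) ^ j * (-(q ^ 2 * t ^ 2 / (1 + q))) ^ j / qFact (q ^ 2) j) *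
            (q ^ (((j : ℝ) - (j : ℝ)) * ((j : ℝ) - (j : ℝ) + 1) +
              ((j : ℝ) + 1) * ((j : ℝ) + 2 * ν + 2) - 2 * ((j : ℝ) + 1) * ((j : ℝ) + ν + 1)) *
            (q ^ (-(j : ℝ) * ((j : ℝ) + 1 + 2 * ν)) * q ^ (2 * (j : ℝ) * ((j : ℝ) + ν)))) := by
          ring
      _ = ((q ^ 2 * t ^ 2 / (1 + q)) ^ j / qFact (q ^ 2) j) * ((q ^ (2 * j) : ℝ)⁻¹) := by
          rw [hR, hneg]
      _ = t ^ (2 * j) / ((1 + q) ^ j * qFact (q ^ 2) j) := by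
          rw [div_pow, mul_pow, ← pow_mul]
          field_simp
          rw [← pow_mul t 2 j]
  · intro k hk hkj
    have hkj2 : k < j := by
      have := Finset.mem_range.mp hk; omega
    obtain ⟨n, rfl⟩ : ∃ n, j = k + n := ⟨j - k, by omega⟩
    have hn1 : 1 ≤ n := by omega
    rw [← Finset.Ico_add_one_right_eq_Icc, Finset.sum_Ico_eq_sum_range,
      show k + n + 1 - k = n + 1 from by omega]
    have expand : ∀ m ∈ Finset.range (n + 1),
        (-1 : ℝ) ^ (k + m) *
            qPoch (q ^ (2 * ((k + m : ℕ) : ℝ) + 2 * ν + 2)) (q ^ 2) (k + n - (k + m)) /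
              (qFact (q ^ 2) (k + n - (k + m)) * (1 - q ^ 2) ^ (k + n - (k + m))) *
          q ^ ((((k + n : ℕ) : ℝ) - ((k + m : ℕ) : ℝ)) *
                (((k + n : ℕ) : ℝ) - ((k + m : ℕ) : ℝ) + 1) +
                (((k + m : ℕ) : ℝ) + 1) * (((k + m : ℕ) : ℝ) + 2 * ν + 2) -
                2 * (((k + n : ℕ) : ℝ) + 1) * (((k + n : ℕ) : ℝ) + ν + 1)) *
          (q ^ (-((k + m : ℕ) : ℝ) * (((k + m : ℕ) : ℝ) + 1 + 2 * ν)) *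
            (q ^ (2 * (k : ℝ) * ((k : ℝ) + ν)) * (-(q ^ 2 * t ^ 2 / (1 + q))) ^ k /
                (qFact (q ^ 2) (k + m - k) * qFact (q ^ 2) k) *
              (qPoch (q ^ (2 * (k : ℝ) + 2 * ν + 2)) (q ^ 2) (k + m - k) /
                (1 - q ^ 2) ^ (k + m - k))))
        = ((-1 : ℝ) ^ k * qPoch (q ^ (2 * (k : ℝ) + 2 * ν + 2)) (q ^ 2) n *
              q ^ (2 * (k : ℝ) + 2 * ν + 2 -
                2 * (((k + n : ℕ) : ℝ) + 1) * (((k + n : ℕ) : ℝ) + ν + 1) +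
                2 * (k : ℝ) * ((k : ℝ) + ν)) *
              (-(q ^ 2 * t ^ 2 / (1 + q))) ^ k / ((1 - q ^ 2) ^ n * qFact (q ^ 2) k)) *
            ((-1 : ℝ) ^ m * q ^ ((n - m) * (n - m + 1) + 2 * m) /
              (qFact (q ^ 2) (n - m) * qFact (q ^ 2) m)) := by
      intro m hm
      have hm' : m ≤ n := by have := Finset.mem_range.mp hm; omega
      have hB : q ^ (2 * ((k + m : ℕ) : ℝ) + 2 * ν + 2)
          = q ^ (2 * (k : ℝ) + 2 * ν + 2) * (q ^ 2) ^ m := by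
        rw [show ((q : ℝ) ^ 2) ^ m = q ^ (((2 * m : ℕ) : ℝ)) from by
            rw [Real.rpow_natCast, pow_mul],
          ← Real.rpow_add hq0]
        congr 1
        push_cast
        ring
      have hP : qPoch (q ^ (2 * (k : ℝ) + 2 * ν + 2)) (q ^ 2) m *
            qPoch (q ^ (2 * (k : ℝ) + 2 * ν + 2) * (q ^ 2) ^ m) (q ^ 2) (n - m)
          = qPoch (q ^ (2 * (k : ℝ) + 2 * ν + 2)) (q ^ 2) n := by
        rw [← qPoch_add', show m + (n - m) = n from by omega]
      have hW : (1 - q ^ 2) ^ m * (1 - q ^ 2) ^ (n - m) = (1 - q ^ 2) ^ n := by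
        rw [← pow_add]
        congr 1
        omega
      have hq5 : q ^ ((((k + n : ℕ) : ℝ) - ((k + m : ℕ) : ℝ)) *
              (((k + n : ℕ) : ℝ) - ((k + m : ℕ) : ℝ) + 1) +
              (((k + m : ℕ) : ℝ) + 1) * (((k + m : ℕ) : ℝ) + 2 * ν + 2) -
              2 * (((k + n : ℕ) : ℝ) + 1) * (((k + n : ℕ) : ℝ) + ν + 1)) *
            (q ^ (-((k + m : ℕ) : ℝ) * (((k + m : ℕ) : ℝ) + 1 + 2 * ν)) *
              q ^ (2 * (k : ℝ) * ((k : ℝ) + ν)))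
          = (q ^ ((n - m) * (n - m + 1) + 2 * m) : ℝ) *
            q ^ (2 * (k : ℝ) + 2 * ν + 2 -
              2 * (((k + n : ℕ) : ℝ) + 1) * (((k + n : ℕ) : ℝ) + ν + 1) +
              2 * (k : ℝ) * ((k : ℝ) + ν)) := by
        rw [show ((q : ℝ) ^ ((n - m) * (n - m + 1) + 2 * m))
            = q ^ ((((n - m) * (n - m + 1) + 2 * m : ℕ) : ℝ)) from
            (Real.rpow_natCast q _).symm,
          ← Real.rpow_add hq0, ← Real.rpow_add hq0, ← Real.rpow_add hq0]
        congr 1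
        push_cast [Nat.cast_sub hm']
        ring
      rw [show k + n - (k + m) = n - m from by omega,
        show k + m - k = m from by omega, hB]
      calc (-1 : ℝ) ^ (k + m) *
            qPoch (q ^ (2 * (k : ℝ) + 2 * ν + 2) * (q ^ 2) ^ m) (q ^ 2) (n - m) /
              (qFact (q ^ 2) (n - m) * (1 - q ^ 2) ^ (n - m)) *
            q ^ ((((k + n : ℕ) : ℝ) - ((k + m : ℕ) : ℝ)) *
                (((k + n : ℕ) : ℝ) - ((k + m : ℕ) : ℝ) + 1) +
                (((k + m : ℕ) : ℝ) + 1) * (((k + m : ℕ) : ℝ) + 2 * ν + 2) -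
                2 * (((k + n : ℕ) : ℝ) + 1) * (((k + n : ℕ) : ℝ) + ν + 1)) *
            (q ^ (-((k + m : ℕ) : ℝ) * (((k + m : ℕ) : ℝ) + 1 + 2 * ν)) *
              (q ^ (2 * (k : ℝ) * ((k : ℝ) + ν)) * (-(q ^ 2 * t ^ 2 / (1 + q))) ^ k /
                  (qFact (q ^ 2) m * qFact (q ^ 2) k) *
                (qPoch (q ^ (2 * (k : ℝ) + 2 * ν + 2)) (q ^ 2) m / (1 - q ^ 2) ^ m)))
          = ((-1 : ℝ) ^ k * (-1 : ℝ) ^ m *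
              qPoch (q ^ (2 * (k : ℝ) + 2 * ν + 2) * (q ^ 2) ^ m) (q ^ 2) (n - m) *
              qPoch (q ^ (2 * (k : ℝ) + 2 * ν + 2)) (q ^ 2) m *
              (-(q ^ 2 * t ^ 2 / (1 + q))) ^ k /
              (qFact (q ^ 2) (n - m) * (1 - q ^ 2) ^ (n - m) * qFact (q ^ 2) m *
                qFact (q ^ 2) k * (1 - q ^ 2) ^ m)) *
            (q ^ ((((k + n : ℕ) : ℝ) - ((k + m : ℕ) : ℝ)) *
                (((k + n : ℕ) : ℝ) - ((k + m : ℕ) : ℝ) + 1) +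
                (((k + m : ℕ) : ℝ) + 1) * (((k + m : ℕ) : ℝ) + 2 * ν + 2) -
                2 * (((k + n : ℕ) : ℝ) + 1) * (((k + n : ℕ) : ℝ) + ν + 1)) *
              (q ^ (-((k + m : ℕ) : ℝ) * (((k + m : ℕ) : ℝ) + 1 + 2 * ν)) *
                q ^ (2 * (k : ℝ) * ((k : ℝ) + ν)))) := by
            rw [pow_add]
            ring
        _ = ((-1 : ℝ) ^ k * (-1 : ℝ) ^ m *
              qPoch (q ^ (2 * (k : ℝ) + 2 * ν + 2) * (q ^ 2) ^ m) (q ^ 2) (n - m) *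
              qPoch (q ^ (2 * (k : ℝ) + 2 * ν + 2)) (q ^ 2) m *
              (-(q ^ 2 * t ^ 2 / (1 + q))) ^ k /
              (qFact (q ^ 2) (n - m) * (1 - q ^ 2) ^ (n - m) * qFact (q ^ 2) m *
                qFact (q ^ 2) k * (1 - q ^ 2) ^ m)) *
            ((q ^ ((n - m) * (n - m + 1) + 2 * m) : ℝ) *
              q ^ (2 * (k : ℝ) + 2 * ν + 2 -
                2 * (((k + n : ℕ) : ℝ) + 1) * (((k + n : ℕ) : ℝ) + ν + 1) +
                2 * (k : ℝ) * ((k : ℝ) + ν))) := by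
            rw [hq5]
        _ = ((-1 : ℝ) ^ k *
              (qPoch (q ^ (2 * (k : ℝ) + 2 * ν + 2)) (q ^ 2) m *
                qPoch (q ^ (2 * (k : ℝ) + 2 * ν + 2) * (q ^ 2) ^ m) (q ^ 2) (n - m)) *
              q ^ (2 * (k : ℝ) + 2 * ν + 2 -
                2 * (((k + n : ℕ) : ℝ) + 1) * (((k + n : ℕ) : ℝ) + ν + 1) +
                2 * (k : ℝ) * ((k : ℝ) + ν)) *
              (-(q ^ 2 * t ^ 2 / (1 + q))) ^ k /
              (((1 - q ^ 2) ^ m * (1 - q ^ 2) ^ (n - m)) * qFact (q ^ 2) k)) *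
            ((-1 : ℝ) ^ m * q ^ ((n - m) * (n - m + 1) + 2 * m) /
              (qFact (q ^ 2) (n - m) * qFact (q ^ 2) m)) := by
            ring
        _ = _ := by rw [hP, hW]
    rw [Finset.sum_congr rfl expand, ← Finset.mul_sum, keysumAux q hq0 hq1 n hn1, mul_zero]
end
end

section
/- Divergence and reduction of the infinite Jackson integral of E_q(−t): let γ > 0. (a) If γ ≠ q^j/(1−q) for every j ∈ ℤ, then the bilateral series ∑_{k=−∞}^{∞} E_q(−q^k γ) q^k does not converge (its terms E_q(−q^k γ) q^k do not tend to 0 as k → −∞). (b) If γ = q^j/(1−q) for some j ∈ ℤ, then E_q(−q^k γ) = 0 for every k ∈ ℤ with k + j < 0, and (1−q) γ ∑_{k=−∞}^{∞} E_q(−q^k γ) q^k = ∑_{l=0}^∞ E_q(−q^l/(1−q)) q^l, i.e. ∫_0^{γ·∞} E_q(−t) d_q t = ∫_0^{1/(1−q)} E_q(−t) d_q t. -/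
open scoped BigOperators

noncomputable section

namespace QAux

variable {q : ℝ} (hq0 : 0 < q) (hq1 : q < 1)

/-- coefficient -/
def a (q : ℝ) (j : ℕ) : ℝ := q ^ (j * (j - 1) / 2) / qFact q j

include hq0 hq1

lemma qNum_nat (i : ℕ) : qNum q ((i : ℝ) + 1) = (1 - q ^ (i + 1)) / (1 - q) := by
  have : (q : ℝ) ^ ((i : ℝ) + 1) = q ^ (i + 1 : ℕ) := by
    rw [← Real.rpow_natCast q (i+1)]
    push_cast
    ring_nf
  rw [qNum, this]
  rw [div_eq_div_iff (by nlinarith [pow_pos hq0 (i+1)] : (q:ℝ) - 1 ≠ 0) (by nlinarith : (1:ℝ) - q ≠ 0)]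
  ring

lemma one_le_qNum (i : ℕ) : 1 ≤ qNum q ((i : ℝ) + 1) := by
  rw [qNum_nat hq0 hq1]
  rw [le_div_iff₀ (by linarith)]
  have : q ^ (i+1) ≤ q := by
    calc q ^ (i+1) ≤ q ^ 1 := pow_le_pow_of_le_one (le_of_lt hq0) (le_of_lt hq1) (by omega)
    _ = q := pow_one q
  linarith

lemma one_le_qFact (n : ℕ) : 1 ≤ qFact q n := by
  induction n with
  | zero => simp [qFact]
  | succ n ih =>
    rw [qFact, Finset.prod_range_succ, ← qFact]
    nlinarith [one_le_qNum hq0 hq1 n]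

lemma qFact_pos (n : ℕ) : 0 < qFact q n := lt_of_lt_of_le one_pos (one_le_qFact hq0 hq1 n)

lemma a_pos (j : ℕ) : 0 < a q j :=
  div_pos (pow_pos hq0 _) (qFact_pos hq0 hq1 j)

lemma a_le_one (j : ℕ) : a q j ≤ 1 := by
  rw [a, div_le_one (qFact_pos hq0 hq1 j)]
  calc q ^ (j * (j-1)/2) ≤ 1 := pow_le_one₀ (le_of_lt hq0) (le_of_lt hq1)
  _ ≤ qFact q j := one_le_qFact hq0 hq1 j

lemma qFact_succ (j : ℕ) : qFact q (j + 1) = qFact q j * qNum q ((j : ℝ) + 1) := by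
  rw [qFact, qFact, Finset.prod_range_succ]

lemma a_succ (j : ℕ) : a q (j + 1) * (1 - q ^ (j+1)) = (1 - q) * (a q j * q ^ j) := by
  have hpow : (j+1) * ((j+1) - 1) / 2 = j * (j - 1) / 2 + j := by
    rcases j with _ | n
    · simp
    · simp only [Nat.add_sub_cancel]
      have h1 : (n+1+1) * (n+1) = (n+1) * n + 2 * (n+1) := by ring
      omega
  rw [a, a, qFact_succ hq0 hq1, qNum_nat hq0 hq1, hpow, pow_add]
  have hF := qFact_pos hq0 hq1 j
  have h1q : (1:ℝ) - q ≠ 0 := by linarith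
  have hqj' : (0:ℝ) < 1 - q ^ (j+1) := by nlinarith [pow_lt_one₀ (le_of_lt hq0) hq1 (show j+1 ≠ 0 by omega)]
  have hqj : (1:ℝ) - q ^ (j+1) ≠ 0 := ne_of_gt hqj'
  field_simp

lemma a_succ_le (j : ℕ) : a q (j + 1) ≤ a q j * q ^ j := by
  have h := a_succ hq0 hq1 j
  have hqj' : (0:ℝ) < 1 - q ^ (j+1) := by
    nlinarith [pow_lt_one₀ (le_of_lt hq0) hq1 (show j+1 ≠ 0 by omega)]
  have h1 : (1:ℝ) - q ≤ 1 - q ^ (j+1) := by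
    have : q ^ (j+1) ≤ q := by
      calc q ^ (j+1) ≤ q ^ 1 := pow_le_pow_of_le_one (le_of_lt hq0) (le_of_lt hq1) (by omega)
      _ = q := pow_one q
    linarith
  have ha := a_pos hq0 hq1 j
  have hqp := pow_pos hq0 j
  nlinarith [a_pos hq0 hq1 (j+1)]

lemma summable_a_mul (t : ℝ) : Summable (fun j : ℕ => a q j * t ^ j) := by
  apply summable_of_ratio_norm_eventually_le (r := 1/2) (by norm_num)
  have hto : Filter.Tendsto (fun j : ℕ => q ^ j * |t|) Filter.atTop (nhds 0) := by
    have := (tendsto_pow_atTop_nhds_zero_of_lt_one (le_of_lt hq0) hq1).mul_const |t|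
    simpa using this
  filter_upwards [hto.eventually_le_const (by norm_num : (0:ℝ) < 1/2)] with j hj
  have ha := a_pos hq0 hq1 j
  have ha1 := a_pos hq0 hq1 (j+1)
  have hb : |a q (j+1) * t ^ (j+1)| = a q (j+1) * (|t|^j * |t|) := by
    rw [abs_mul, abs_of_pos ha1, abs_pow, pow_succ]
  rw [Real.norm_eq_abs, Real.norm_eq_abs, hb, abs_mul, abs_of_pos ha, abs_pow]
  have h2 : a q (j+1) * (|t|^j * |t|) ≤ (a q j * q ^ j) * (|t|^j * |t|) := by
    apply mul_le_mul_of_nonneg_right (a_succ_le hq0 hq1 j)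
    positivity
  calc a q (j+1) * (|t|^j * |t|) ≤ (a q j * q ^ j) * (|t|^j * |t|) := h2
  _ = (q ^ j * |t|) * (a q j * |t|^j) := by ring
  _ ≤ (1/2) * (a q j * |t|^j) := by
      apply mul_le_mul_of_nonneg_right hj
      positivity

lemma qExpE_eq_tsum (t : ℝ) : qExpE q t = ∑' j : ℕ, a q j * t ^ j := by
  apply tsum_congr
  intro j
  rw [a]
  ring

lemma summable_qExpE (t : ℝ) : Summable (fun j : ℕ => q ^ (j * (j - 1) / 2) * t ^ j / qFact q j) := by
  have := summable_a_mul hq0 hq1 t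
  apply this.congr
  intro j
  rw [a]; ring
lemma qExpE_funeq (t : ℝ) : qExpE q t = (1 + (1-q)*t) * qExpE q (q*t) := by
  have hS := summable_a_mul hq0 hq1 (q*t)
  have hT := summable_a_mul hq0 hq1 t
  have hg : Summable (fun j : ℕ => a q j * t^j - a q j * (q*t)^j) := hT.sub hS
  rw [qExpE_eq_tsum hq0 hq1 t, qExpE_eq_tsum hq0 hq1 (q*t)]
  have key : ∑' j : ℕ, (a q j * t^j - a q j * (q*t)^j)
      = (1-q)*t* ∑' j : ℕ, a q j * (q*t)^j := by
    rw [Summable.tsum_eq_zero_add hg, show (a q 0 * t ^ 0 - a q 0 * (q*t)^0) = 0 by simp, zero_add,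
      ← tsum_mul_left]
    apply tsum_congr
    intro j
    rw [mul_pow, mul_pow]
    linear_combination (t^(j+1)) * (a_succ hq0 hq1 j)
  have hsplit : (fun j : ℕ => a q j * t^j)
      = fun j : ℕ => (a q j * (q*t)^j) + (a q j * t^j - a q j * (q*t)^j) := by
    funext j; ring
  rw [hsplit, Summable.tsum_add hS hg, key]
  ring

lemma abs_qExpE_le {t T : ℝ} (h : |t| ≤ T) : |qExpE q t| ≤ ∑' j : ℕ, a q j * T^j := by
  rw [qExpE_eq_tsum hq0 hq1, ← Real.norm_eq_abs]
  apply tsum_of_norm_bounded (summable_a_mul hq0 hq1 T).hasSum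
  intro j
  rw [Real.norm_eq_abs, abs_mul, abs_of_pos (a_pos hq0 hq1 j), abs_pow]
  exact mul_le_mul_of_nonneg_left (pow_le_pow_left₀ (abs_nonneg t) h j)
    (le_of_lt (a_pos hq0 hq1 j))

lemma qExpE_pos_of_small {s : ℝ} (h0 : 0 ≤ s) (h2 : s < 1/2) : 0 < qExpE q (-s) := by
  rw [qExpE_eq_tsum hq0 hq1, Summable.tsum_eq_zero_add (summable_a_mul hq0 hq1 (-s))]
  have a0 : a q 0 * (-s)^0 = 1 := by simp [a, qFact]
  have hs1 : s < 1 := by linarith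
  have htail : |∑' j : ℕ, a q (j+1) * (-s)^(j+1)| ≤ ∑' j : ℕ, s * s^j := by
    rw [← Real.norm_eq_abs]
    apply tsum_of_norm_bounded ((summable_geometric_of_lt_one h0 hs1).mul_left s).hasSum
    intro j
    rw [Real.norm_eq_abs, abs_mul, abs_of_pos (a_pos hq0 hq1 (j+1)), abs_pow, abs_neg,
      abs_of_nonneg h0]
    calc a q (j+1) * s^(j+1) ≤ 1 * s^(j+1) :=
          mul_le_mul_of_nonneg_right (a_le_one hq0 hq1 (j+1)) (by positivity)
    _ = s * s^j := by rw [one_mul, pow_succ]; ring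
  have hgeo : ∑' j : ℕ, s * s^j = s * (1-s)⁻¹ := by
    rw [tsum_mul_left, tsum_geometric_of_lt_one h0 hs1]
  have hlt : s * (1-s)⁻¹ < 1 := by
    rw [mul_inv_lt_iff₀ (by linarith : (0:ℝ) < 1 - s)]
    linarith
  rw [a0]
  have := abs_le.mp htail
  have h3 : ∑' j : ℕ, s * s^j < 1 := by rw [hgeo]; exact hlt
  linarith [this.1]
end QAux

/-- divergence and reduction of `∫_0^{γ·∞} E_q(-t) d_q t` for `γ > 0`.
(a) If `γ ≠ q^j/(1-q)` for all `j ∈ ℤ`, the bilateral series `∑_{k∈ℤ} E_q(-q^kγ) q^k`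
does not converge: its terms do not tend to `0` as `k → -∞` (hence it is not summable).
(b) If `γ = q^j/(1-q)` for some `j ∈ ℤ`, then `E_q(-q^kγ) = 0` whenever `k + j < 0`, and
`(1-q)γ ∑_{k∈ℤ} E_q(-q^kγ) q^k = ∑_{l=0}^∞ E_q(-q^l/(1-q)) q^l`, i.e.
`∫_0^{γ·∞} E_q(-t) d_q t = ∫_0^{1/(1-q)} E_q(-t) d_q t`. -/
theorem qExpE_jacksonInf (q : ℝ) (hq0 : 0 < q) (hq1 : q < 1) (γ : ℝ) (hγ : 0 < γ) :
    ((∀ j : ℤ, γ ≠ q ^ j / (1 - q)) →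
      ¬ Filter.Tendsto (fun k : ℤ => qExpE q (-(q ^ k * γ)) * q ^ k)
          Filter.atBot (nhds 0) ∧
      ¬ Summable (fun k : ℤ => qExpE q (-(q ^ k * γ)) * q ^ k)) ∧
    (∀ j : ℤ, γ = q ^ j / (1 - q) →
      (∀ k : ℤ, k + j < 0 → qExpE q (-(q ^ k * γ)) = 0) ∧
      (1 - q) * γ * ∑' k : ℤ, qExpE q (-(q ^ k * γ)) * q ^ k =
        ∑' l : ℕ, qExpE q (-(q ^ l / (1 - q))) * q ^ l) := by
  have hqne : q ≠ 0 := ne_of_gt hq0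
  have h1q : (0:ℝ) < 1 - q := by linarith
  have hqk : ∀ k : ℤ, (0:ℝ) < q ^ k := fun k => zpow_pos hq0 k
  -- functional equation in zpow form
  have fe : ∀ k : ℤ, qExpE q (-(q ^ k * γ)) =
      (1 - (1-q) * (q ^ k * γ)) * qExpE q (-(q ^ (k+1) * γ)) := by
    intro k
    have h2 : q * -(q ^ k * γ) = -(q ^ (k+1) * γ) := by
      rw [zpow_add₀ hqne, zpow_one]; ring
    have := QAux.qExpE_funeq hq0 hq1 (-(q ^ k * γ))
    rw [h2] at this
    rw [this]; ring
  constructor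
  · -- part (a)
    intro H
    have cne : ∀ k : ℤ, 1 - (1-q) * (q ^ k * γ) ≠ 0 := by
      intro k h
      apply H (-k)
      rw [zpow_neg]
      have hk0 := hqk k
      field_simp
      linear_combination -h
    -- all values of qExpE are nonzero
    have chain : ∀ n : ℕ, ∀ k : ℤ,
        qExpE q (-(q ^ (k + (n:ℤ)) * γ)) ≠ 0 → qExpE q (-(q ^ k * γ)) ≠ 0 := by
      intro n
      induction n with
      | zero => intro k h; simpa using h
      | succ n ih =>
        intro k h
        have h' : qExpE q (-(q ^ ((k+1) + (n:ℤ)) * γ)) ≠ 0 := by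
          have : (k+1) + (n:ℤ) = k + ((n:ℕ)+1 : ℕ) := by push_cast; ring
          rw [this]; exact h
        have h1 := ih (k+1) h'
        rw [fe k]
        exact mul_ne_zero (cne k) h1
    have fnz : ∀ k : ℤ, qExpE q (-(q ^ k * γ)) ≠ 0 := by
      intro k
      obtain ⟨N, hN⟩ := exists_pow_lt_of_lt_one
        (show (0:ℝ) < (1/2) / (q ^ k * γ) by positivity) hq1
      apply chain N k
      have hsmall : q ^ (k + (N:ℤ)) * γ < 1/2 := by
        have h1 : q ^ (k + (N:ℤ)) * γ = q ^ N * (q ^ k * γ) := by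
          rw [zpow_add₀ hqne, zpow_natCast]; ring
        rw [h1]
        calc q ^ N * (q ^ k * γ) < ((1/2) / (q ^ k * γ)) * (q ^ k * γ) := by
              apply mul_lt_mul_of_pos_right hN (by positivity)
        _ = 1/2 := div_mul_cancel₀ _ (by positivity)
      have := QAux.qExpE_pos_of_small hq0 hq1
        (show (0:ℝ) ≤ q ^ (k + (N:ℤ)) * γ by positivity) hsmall
      exact ne_of_gt this
    -- choose K with (1-q) q^k γ ≥ 2 for k ≤ K
    obtain ⟨n, hn⟩ := pow_unbounded_of_one_lt (2 / ((1-q) * γ)) (one_lt_inv₀ hq0 |>.mpr hq1)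
    set K : ℤ := -(n:ℤ) with hK
    have hKprop : ∀ k : ℤ, k ≤ K → 2 ≤ (1-q) * (q ^ k * γ) := by
      intro k hk
      have h1 : q ^ K ≤ q ^ k := zpow_le_zpow_right_of_le_one₀ hq0 (le_of_lt hq1) hk
      have h2 : (q:ℝ) ^ K = q⁻¹ ^ n := by rw [hK, zpow_neg, ← zpow_natCast, inv_zpow]
      have h3 : 2 / ((1-q) * γ) < q ^ K := by rw [h2]; exact hn
      have h4 : 2 / ((1-q) * γ) < q ^ k := lt_of_lt_of_le h3 h1
      have h5 : 2 < q ^ k * ((1-q) * γ) := by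
        rw [div_lt_iff₀ (by positivity)] at h4
        linarith
      nlinarith
    set A : ℤ → ℝ := fun k => qExpE q (-(q ^ k * γ)) * q ^ k with hA
    have Amono : ∀ k : ℤ, k ≤ K → |A (k+1)| ≤ |A k| := by
      intro k hk
      have hrel : A k = (1 - (1-q) * (q ^ k * γ)) / q * A (k+1) := by
        rw [hA]
        simp only []
        rw [fe k, zpow_add₀ hqne, zpow_one]
        field_simp
      have hc : 1 ≤ |1 - (1-q) * (q ^ k * γ)| := by
        have := hKprop k hk
        rw [abs_of_nonpos (by linarith)]
        linarith
      have habs : |A k| = |1 - (1-q) * (q ^ k * γ)| / q * |A (k+1)| := by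
        rw [hrel, abs_mul]
        congr 1
        rw [abs_div, abs_of_pos hq0]
      rw [habs]
      refine le_mul_of_one_le_left (abs_nonneg _) ?_
      rw [le_div_iff₀ hq0]
      linarith
    have ind : ∀ n : ℕ, |A K| ≤ |A (K - (n:ℤ))| := by
      intro m
      induction m with
      | zero => simp
      | succ m ih =>
        have hstep : |A ((K - ((m:ℤ)+1)) + 1)| ≤ |A (K - ((m:ℤ)+1))| :=
          Amono _ (by omega)
        have : (K - ((m:ℤ)+1)) + 1 = K - (m:ℤ) := by ring
        rw [this] at hstep
        have h2 : ((m+1 : ℕ) : ℤ) = (m:ℤ) + 1 := by push_cast; ring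
        rw [h2]
        exact le_trans ih hstep
    have hAK : 0 < |A K| := abs_pos.mpr (mul_ne_zero (fnz K) (ne_of_gt (hqk K)))
    have na1 : ¬ Filter.Tendsto (fun k : ℤ => qExpE q (-(q ^ k * γ)) * q ^ k)
        Filter.atBot (nhds 0) := by
      intro hT
      have hev : ∀ᶠ k in Filter.atBot, dist (A k) 0 < |A K| :=
        Metric.tendsto_nhds.mp hT (|A K|) hAK
      obtain ⟨K', hK'⟩ := Filter.eventually_atBot.mp hev
      set k : ℤ := min K K' with hk
      have h1 : dist (A k) 0 < |A K| := hK' k (min_le_right _ _)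
      rw [Real.dist_eq, sub_zero] at h1
      have h2 : |A K| ≤ |A k| := by
        have h3 : K - ((K - k).toNat : ℤ) = k := by
          have : k ≤ K := min_le_left _ _
          omega
        have := ind (K - k).toNat
        rwa [h3] at this
      linarith
    refine ⟨na1, fun hs => na1 ?_⟩
    have h1 := hs.tendsto_cofinite_zero
    rw [Int.cofinite_eq] at h1
    exact h1.mono_left le_sup_left
  · -- part (b)
    intro j hj
    -- zeros for nonpositive exponents
    have zeron : ∀ n : ℕ, qExpE q (-(q ^ (-(n:ℤ)) / (1-q))) = 0 := by
      intro n
      induction n with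
      | zero =>
        have := QAux.qExpE_funeq hq0 hq1 (-((1:ℝ) / (1-q)))
        have hfac : 1 + (1-q) * -((1:ℝ) / (1-q)) = 0 := by field_simp; norm_num
        rw [hfac, zero_mul] at this
        simpa using this
      | succ n ih =>
        have := QAux.qExpE_funeq hq0 hq1 (-(q ^ (-((n:ℤ)+1)) / (1-q)))
        have h2 : q * -(q ^ (-((n:ℤ)+1)) / (1-q)) = -(q ^ (-(n:ℤ)) / (1-q)) := by
          rw [show -((n:ℤ)+1) = -(n:ℤ) + (-1) by ring, zpow_add₀ hqne, zpow_neg_one]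
          field_simp
        rw [h2, ih, mul_zero] at this
        have h3 : (-(((n:ℕ)+1 : ℕ)):ℤ) = -((n:ℤ)+1) := by push_cast; ring
        rw [h3]
        exact this
    have zeroal : ∀ m : ℤ, m ≤ 0 → qExpE q (-(q ^ m / (1-q))) = 0 := by
      intro m hm
      have h1 : m = -(((-m).toNat : ℕ) : ℤ) := by omega
      rw [h1]; exact zeron _
    have hargs : ∀ k : ℤ, q ^ k * γ = q ^ (k+j) / (1-q) := by
      intro k
      rw [hj, zpow_add₀ hqne]; ring
    have kzero : ∀ k : ℤ, k + j < 0 → qExpE q (-(q ^ k * γ)) = 0 := by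
      intro k hk
      rw [hargs k]
      exact zeroal _ (le_of_lt hk)
    refine ⟨kzero, ?_⟩
    -- the natural-index sequence
    set h : ℕ → ℝ := fun l => qExpE q (-(q ^ l / (1-q))) * q ^ l with hdefh
    have hsum : Summable h := by
      apply Summable.of_norm_bounded
        (g := fun l => (∑' i : ℕ, QAux.a q i * ((1:ℝ)/(1-q)) ^ i) * q ^ l)
        (((summable_geometric_of_lt_one (le_of_lt hq0) hq1).mul_left _))
      intro l
      rw [hdefh, Real.norm_eq_abs, abs_mul, abs_pow, abs_of_pos hq0]
      apply mul_le_mul_of_nonneg_right _ (by positivity)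
      apply QAux.abs_qExpE_le hq0 hq1
      rw [abs_neg, abs_of_nonneg (by positivity)]
      rw [div_le_div_iff₀ h1q h1q]
      have : q ^ l ≤ 1 := pow_le_one₀ (le_of_lt hq0) (le_of_lt hq1)
      nlinarith
    set F : ℤ → ℝ := fun k => qExpE q (-(q ^ k * γ)) * q ^ k with hdefF
    set g : ℕ → ℤ := fun n => (n:ℤ) + 1 - j with hdefg
    have hginj : Function.Injective g := by
      intro m n hmn
      simp only [hdefg] at hmn
      omega
    have hsupp : Function.support F ⊆ Set.range g := by
      intro k hk
      rw [Function.mem_support] at hk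
      have h1 : 1 ≤ k + j := by
        by_contra h2
        push_neg at h2
        have h3 : k + j ≤ 0 := by omega
        apply hk
        rw [hdefF]
        simp only []
        rw [hargs k, zeroal _ h3, zero_mul]
      refine ⟨(k + j - 1).toNat, ?_⟩
      simp only [hdefg]
      omega
    have htsum : ∑' k : ℤ, F k = ∑' n : ℕ, F (g n) := (hginj.tsum_eq hsupp).symm
    have hFg : ∀ n : ℕ, F (g n) = h (n+1) * q ^ (-j) := by
      intro n
      rw [hdefF, hdefg, hdefh]
      simp only []
      have e1 : q ^ ((n:ℤ) + 1 - j) * γ = q ^ ((n:ℕ)+1 : ℕ) / (1-q) := by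
        rw [hargs ((n:ℤ)+1-j)]
        congr 1
        rw [show (n:ℤ) + 1 - j + j = ((n:ℕ)+1 : ℕ) by push_cast; ring, zpow_natCast]
      have e2 : (q:ℝ) ^ ((n:ℤ) + 1 - j) = q ^ ((n:ℕ)+1 : ℕ) * q ^ (-j) := by
        rw [show (n:ℤ) + 1 - j = (((n:ℕ)+1 : ℕ) : ℤ) + (-j) by push_cast; ring,
          zpow_add₀ hqne, zpow_natCast]
      rw [e1, e2]
      ring
    have hh0 : h 0 = 0 := by
      rw [hdefh]
      simp only [pow_zero, mul_one]
      have := zeroal 0 le_rfl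
      rw [zpow_zero] at this
      rw [this]
    calc (1 - q) * γ * ∑' k : ℤ, F k
        = (1 - q) * γ * ∑' n : ℕ, (h (n+1) * q ^ (-j)) := by
          rw [htsum]; congr 1; exact tsum_congr hFg
    _ = (1 - q) * γ * (q ^ (-j) * ∑' n : ℕ, h (n+1)) := by rw [tsum_mul_right]; ring
    _ = ∑' n : ℕ, h (n+1) := by
          rw [hj, zpow_neg]
          field_simp
    _ = h 0 + ∑' n : ℕ, h (n+1) := by rw [hh0, zero_add]
    _ = ∑' l : ℕ, h l := (Summable.tsum_eq_zero_add hsum).symm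
end
end
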